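/- Fix t ∈ [0,1) with binary digits t_j, let n be a positive integer with 2^N ≤ n < 2^{N+1}, and set m = ∑_{i=0}^{N−1} t_{i+1} 2^i. Then the conjugate Dirichlet kernel satisfies the pointwise identity D̃_n^{(t)} = D_n − 2 w_m D_m − 2 t_{N+1} (D_n − D_{2^N}) on G. -/

import Mathlib

open MeasureTheory Finset

noncomputable section

/-- The dyadic group: countable product of ℤ/2. -/
abbrev G := ℕ → ZMod 2

/-- Binary digits of a real number, as an element of the dyadic group. -/
def toG (x : ℝ) : G := fun n => ((⌊x * 2 ^ (n + 1)⌋ : ℤ) : ZMod 2)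

/-- Haar (product) measure on the dyadic group, realized as the pushforward
of Lebesgue measure on `[0,1)` under the binary digit map. -/
def muG : Measure G := (volume.restrict (Set.Ico (0:ℝ) 1)).map toG

/-- Walsh–Paley functions. -/
def walsh (m : ℕ) (x : G) : ℝ :=
  ∏ k ∈ Finset.range m, if m.testBit k then (-1 : ℝ) ^ ((x k).val) else 1

/-- Walsh–Dirichlet kernel. -/
def Dir (n : ℕ) (x : G) : ℝ := ∑ k ∈ Finset.range n, walsh k x

/-- Dyadic interval `I_n` of rank `n` about `0`. -/
def Iset (n : ℕ) : Set G := {x | ∀ i < n, x i = 0}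

/-- `k`-th binary digit of `n`, as a natural number. -/
def bit (n k : ℕ) : ℕ := (n.testBit k).toNat

/-- `α_i(n) = |∑_{k<i} n_k 2^k − n_i 2^i|`. -/
def alpha (n i : ℕ) : ℤ :=
  |(∑ k ∈ Finset.range i, (bit n k : ℤ) * 2 ^ k) - (bit n i : ℤ) * 2 ^ i|

/-- Binary variation `V(n) = n_0 + ∑_{k≥1} |n_k − n_{k−1}|`. -/
def V (n : ℕ) : ℕ :=
  bit n 0 + ∑ k ∈ Finset.range n, if n.testBit (k+1) ≠ n.testBit k then 1 else 0

/-- `A(n)`: indices where consecutive binary digits differ (with `n_{−1} = 0`). -/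
def Aset (n : ℕ) : Finset ℕ :=
  (Finset.range (n+1)).filter
    (fun i => if i = 0 then n.testBit 0 else n.testBit i ≠ n.testBit (i-1))

/-- `S(n) = ∑_{i ∈ A(n)} α_i(n)/2^{i+1}`. -/
def S (n : ℕ) : ℝ := ∑ i ∈ Aset n, (alpha n i : ℝ) / 2 ^ (i+1)

/-- `j`-th binary digit of a real number `t ∈ [0,1)`. -/
def tdig (t : ℝ) (j : ℕ) : ℕ := (⌊t * 2 ^ (j+1)⌋ % 2).toNat

/-- `m = ∑_{i=0}^{N-1} t_{i+1} 2^i`. -/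
def mOf (t : ℝ) (N : ℕ) : ℕ := ∑ i ∈ Finset.range N, tdig t (i+1) * 2 ^ i

/-- Conjugate Walsh–Dirichlet kernel
`D̃_n^{(t)} = D_n − 2 w_m D_m − 2 t_{N+1}(D_n − D_{2^N})` where `m = mOf t N`. -/
def Dconj (t : ℝ) (N n : ℕ) (x : G) : ℝ :=
  Dir n x - 2 * walsh (mOf t N) x * Dir (mOf t N) x
    - 2 * (tdig t (N+1) : ℝ) * (Dir n x - Dir (2^N) x)

/-- Lebesgue constant of the conjugate transform. -/
def Leb (t : ℝ) (N n : ℕ) : ℝ := ∫ x, |Dconj t N n x| ∂muG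

/-- `T(a,b) = {i : 1 ≤ i ≤ N−1, a_i ≠ a_{i−1}, b_i = b_{i−1}}`. -/
def Tset (N a b : ℕ) : Finset ℕ :=
  (Finset.Icc 1 (N-1)).filter
    (fun i => a.testBit i ≠ a.testBit (i-1) ∧ b.testBit i = b.testBit (i-1))


lemma walsh_zero (x : G) : walsh 0 x = 1 := by simp [walsh]

lemma walsh_eq_prod {m M : ℕ} (h : m ≤ M) (x : G) :
    walsh m x = ∏ k ∈ Finset.range M, if m.testBit k then (-1 : ℝ) ^ ((x k).val) else 1 := by
  rw [walsh, ← Finset.prod_range_mul_prod_Ico _ h]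
  have : ∀ k ∈ Finset.Ico m M, (if m.testBit k then (-1 : ℝ) ^ ((x k).val) else 1) = 1 := by
    intro k hk
    have hkm : m ≤ k := (Finset.mem_Ico.mp hk).1
    have : m.testBit k = false :=
      Nat.testBit_eq_false_of_lt (lt_of_le_of_lt hkm (Nat.lt_two_pow_self (n := k)))
    simp [this]
  rw [Finset.prod_congr rfl this, Finset.prod_const_one, mul_one]

lemma walsh_mul (m k : ℕ) (x : G) : walsh m x * walsh k x = walsh (m ^^^ k) x := by
  have hm' : m < 2 ^ (m + k) := lt_of_le_of_lt (Nat.le_add_right m k) Nat.lt_two_pow_self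
  have hk' : k < 2 ^ (m + k) := lt_of_le_of_lt (Nat.le_add_left k m) Nat.lt_two_pow_self
  have hm : m ≤ 2 ^ (m + k) := le_of_lt hm'
  have hk : k ≤ 2 ^ (m + k) := le_of_lt hk'
  have hx : m ^^^ k ≤ 2 ^ (m + k) := le_of_lt (Nat.xor_lt_two_pow hm' hk')
  rw [walsh_eq_prod hm x, walsh_eq_prod hk x, walsh_eq_prod hx x, ← Finset.prod_mul_distrib]
  apply Finset.prod_congr rfl
  intro i _
  rw [Nat.testBit_xor]
  rcases hb1 : m.testBit i <;> rcases hb2 : k.testBit i <;> simp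
  rw [← pow_add, ← two_mul, pow_mul, neg_one_sq, one_pow]

lemma dir_mul_walsh {s N : ℕ} (hs : s < 2 ^ N) (x : G) :
    walsh s x * Dir (2 ^ N) x = Dir (2 ^ N) x := by
  unfold Dir
  rw [Finset.mul_sum]
  simp_rw [walsh_mul]
  exact Finset.sum_nbij' (fun k => s ^^^ k) (fun k => s ^^^ k)
    (fun a ha => Finset.mem_range.mpr
      (Nat.xor_lt_two_pow hs (Finset.mem_range.mp ha)))
    (fun a ha => Finset.mem_range.mpr
      (Nat.xor_lt_two_pow hs (Finset.mem_range.mp ha)))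
    (fun a _ => xor_cancel_left s a)
    (fun a _ => xor_cancel_left s a)
    (fun a _ => rfl)

lemma two_pow_xor_eq_add {N j : ℕ} (hj : j < 2 ^ N) : 2 ^ N ^^^ j = 2 ^ N + j := by
  apply Nat.eq_of_testBit_eq
  intro i
  rcases lt_trichotomy i N with h | h | h
  · rw [Nat.testBit_xor, Nat.testBit_two_pow,
      Nat.testBit_two_pow_add_gt h]
    simp [Nat.ne_of_gt h]
  · subst h
    rw [Nat.testBit_xor, Nat.testBit_two_pow, Nat.testBit_two_pow_add_eq,
      Nat.testBit_eq_false_of_lt hj]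
    simp
  · have h2 : 2 ^ N + j < 2 ^ i := by
      calc 2 ^ N + j < 2 ^ N + 2 ^ N := by omega
      _ = 2 ^ (N + 1) := by ring
      _ ≤ 2 ^ i := Nat.pow_le_pow_right (by norm_num) (by omega)
    rw [Nat.testBit_xor, Nat.testBit_two_pow, Nat.testBit_eq_false_of_lt h2,
      Nat.testBit_eq_false_of_lt (lt_trans hj (by
        exact Nat.pow_lt_pow_right (by norm_num) h))]
    simp [Nat.ne_of_lt h]

lemma walsh_two_pow_mul_dir (N : ℕ) (x : G) :
    walsh (2 ^ N) x * Dir (2 ^ N) x = Dir (2 ^ (N + 1)) x - Dir (2 ^ N) x := by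
  have hsplit : Dir (2 ^ (N + 1)) x
      = Dir (2 ^ N) x + ∑ j ∈ Finset.range (2 ^ N), walsh (2 ^ N + j) x := by
    unfold Dir
    rw [show 2 ^ (N + 1) = 2 ^ N + 2 ^ N by ring, Finset.sum_range_add]
  rw [hsplit]
  have : ∀ j ∈ Finset.range (2 ^ N),
      walsh (2 ^ N + j) x = walsh (2 ^ N) x * walsh j x := by
    intro j hj
    rw [walsh_mul, two_pow_xor_eq_add (Finset.mem_range.mp hj)]
  rw [Finset.sum_congr rfl this, ← Finset.mul_sum]
  unfold Dir
  ring

lemma sum_bits_lt (d : ℕ → ℕ) (hd : ∀ i, d i ≤ 1) (N : ℕ) :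
    ∑ i ∈ Finset.range N, d i * 2 ^ i < 2 ^ N := by
  induction N with
  | zero => simp
  | succ N ih =>
    rw [Finset.sum_range_succ, pow_succ]
    have h1 : d N * 2 ^ N ≤ 1 * 2 ^ N := Nat.mul_le_mul_right _ (hd N)
    rw [one_mul] at h1
    omega

lemma key_identity (d : ℕ → ℕ) (hd : ∀ i, d i ≤ 1) (N : ℕ) (x : G) :
    walsh (∑ i ∈ Finset.range N, d i * 2 ^ i) x * Dir (∑ i ∈ Finset.range N, d i * 2 ^ i) x
      = ∑ i ∈ Finset.range N, (d i : ℝ) * (Dir (2 ^ (i + 1)) x - Dir (2 ^ i) x) := by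
  induction N with
  | zero => simp [Dir]
  | succ N ih =>
    have hmlt : (∑ i ∈ Finset.range N, d i * 2 ^ i) < 2 ^ N := sum_bits_lt d hd N
    set m' := ∑ i ∈ Finset.range N, d i * 2 ^ i with hm'
    rw [Finset.sum_range_succ, Finset.sum_range_succ]
    rcases Nat.le_one_iff_eq_zero_or_eq_one.mp (hd N) with h0 | h1
    · rw [h0]; simpa using ih
    · rw [h1, one_mul, Nat.cast_one, one_mul, add_comm m' (2 ^ N)]
      have hA : walsh (2 ^ N + m') x = walsh (2 ^ N) x * walsh m' x := by
        rw [walsh_mul, two_pow_xor_eq_add hmlt]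
      have hB : Dir (2 ^ N + m') x = Dir (2 ^ N) x + walsh (2 ^ N) x * Dir m' x := by
        unfold Dir
        rw [Finset.sum_range_add, Finset.mul_sum]
        congr 1
        apply Finset.sum_congr rfl
        intro j hj
        rw [walsh_mul, two_pow_xor_eq_add (lt_trans (Finset.mem_range.mp hj) hmlt)]
      have hC : walsh (2 ^ N) x * walsh (2 ^ N) x = 1 := by
        rw [walsh_mul, Nat.xor_self, walsh_zero]
      have hD : walsh m' x * Dir (2 ^ N) x = Dir (2 ^ N) x := dir_mul_walsh hmlt x
      have hE : walsh (2 ^ N) x * Dir (2 ^ N) x = Dir (2 ^ (N + 1)) x - Dir (2 ^ N) x :=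
        walsh_two_pow_mul_dir N x
      rw [hA, hB, ← ih]
      linear_combination (walsh m' x * Dir m' x) * hC + walsh (2 ^ N) x * hD + hE

lemma tdig_le_one (t : ℝ) (j : ℕ) : tdig t j ≤ 1 := by
  unfold tdig
  rcases Int.emod_two_eq_zero_or_one (⌊t * 2 ^ (j + 1)⌋) with h | h <;> simp [h]

lemma neg_one_tdig (t : ℝ) (j : ℕ) : (-1 : ℝ) ^ (tdig t j) = 1 - 2 * (tdig t j : ℝ) := by
  rcases Nat.le_one_iff_eq_zero_or_eq_one.mp (tdig_le_one t j) with h | h <;>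
    rw [h] <;> norm_num

/-- The two expressions for the conjugate Dirichlet kernel coincide. -/
theorem Dconj_formula (t : ℝ) (ht : t ∈ Set.Ico (0:ℝ) 1) (N n : ℕ)
    (h1 : 2^N ≤ n) (h2 : n < 2^(N+1)) :
    ∀ x : G,
      1 + (∑ i ∈ Finset.range N, (-1:ℝ)^(tdig t (i+1)) * (Dir (2^(i+1)) x - Dir (2^i) x))
        + (-1:ℝ)^(tdig t (N+1)) * (Dir n x - Dir (2^N) x)
      = Dconj t N n x := by
  intro x
  have hkey := key_identity (fun i => tdig t (i + 1)) (fun i => tdig_le_one t (i + 1)) N x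
  have hmq : (∑ i ∈ Finset.range N, tdig t (i + 1) * 2 ^ i) = mOf t N := rfl
  rw [hmq] at hkey
  have htel : ∑ i ∈ Finset.range N, (Dir (2 ^ (i + 1)) x - Dir (2 ^ i) x)
      = Dir (2 ^ N) x - Dir (2 ^ 0) x := Finset.sum_range_sub (fun i => Dir (2 ^ i) x) N
  have hD1 : Dir (2 ^ 0) x = 1 := by simp [Dir, walsh]
  unfold Dconj
  simp_rw [neg_one_tdig]
  have hexp : ∑ i ∈ Finset.range N,
      (1 - 2 * (tdig t (i + 1) : ℝ)) * (Dir (2 ^ (i + 1)) x - Dir (2 ^ i) x)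
      = (∑ i ∈ Finset.range N, (Dir (2 ^ (i + 1)) x - Dir (2 ^ i) x))
        - 2 * ∑ i ∈ Finset.range N, (tdig t (i + 1) : ℝ) * (Dir (2 ^ (i + 1)) x - Dir (2 ^ i) x) := by
    rw [Finset.mul_sum, ← Finset.sum_sub_distrib]
    exact Finset.sum_congr rfl (fun i _ => by ring)
  rw [hexp, htel, hD1, ← hkey]
  ring
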